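/- Positivity and upper bound of the Lagrange multiplier for the quasi-static profile (Proposition 4.1(ii)): Let κ > 0, V > 0, a < b, and let u ∈ C²([a,b]) satisfy u(a) = u(b) = 0, ∫_a^b u dx = V, and (d/dx)(u'/√(1+(u')²)) − κ u + λ = 0 on (a,b) for a constant λ ∈ ℝ. Then 0 < λ ≤ (κV + 2)/(b − a). -/

import Mathlib

open Set MeasureTheory intervalIntegral Filter Topology

/-- Limit lemma: if a continuous `f` on `[a,b]` satisfies
`∫ t in x..y, f t ≤ |u x| + |u y| + C` for all `a < x ≤ y < b`,
where `u` is continuous with `u a = u b = 0`, then `∫ t in a..b, f t ≤ C`. -/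
lemma aux_limit (a b : ℝ) (hab : a < b) (u f : ℝ → ℝ)
    (hu : ContinuousOn u (Set.Icc a b)) (hua : u a = 0) (hub : u b = 0)
    (hf : ContinuousOn f (Set.Icc a b)) (C : ℝ)
    (h : ∀ x ∈ Set.Ioo a b, ∀ y ∈ Set.Ioo a b, x ≤ y →
      (∫ t in x..y, f t) ≤ |u x| + |u y| + C) :
    (∫ t in a..b, f t) ≤ C := by
  have hfi : IntegrableOn f (Set.Icc a b) := hf.integrableOn_compact isCompact_Icc
  set P : ℝ → ℝ := fun x => ∫ t in a..x, f t with hP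
  have hPcont : ContinuousOn P (Set.Icc a b) := by
    have := intervalIntegral.continuousOn_primitive (μ := volume) (f := f) (a := a) (b := b) hfi
    refine this.congr fun x hx => ?_
    simp [P, intervalIntegral.integral_of_le hx.1]
  have hsplit : ∀ x ∈ Set.Icc a b, ∀ y ∈ Set.Icc a b, x ≤ y →
      (∫ t in x..y, f t) = P y - P x := by
    intro x hx y hy hxy
    have h1 : IntervalIntegrable f volume a x :=
      (hf.mono (Set.Icc_subset_Icc le_rfl hx.2)).intervalIntegrable_of_Icc hx.1
    have h2 : IntervalIntegrable f volume x y :=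
      (hf.mono (Set.Icc_subset_Icc hx.1 hy.2)).intervalIntegrable_of_Icc hxy
    have := intervalIntegral.integral_add_adjacent_intervals h1 h2
    simp only [P]
    linarith [this]
  -- Step 1: for every y ∈ Ioo a b, P y ≤ |u y| + C
  have step1 : ∀ y ∈ Set.Ioo a b, P y ≤ |u y| + C := by
    intro y hy
    have hne : (𝓝[Set.Ioo a y] a).NeBot := left_nhdsWithin_Ioo_neBot hy.1
    have hsub : Set.Ioo a y ⊆ Set.Ioo a b := Set.Ioo_subset_Ioo le_rfl hy.2.le
    have hsub' : Set.Ioo a y ⊆ Set.Icc a b := hsub.trans Set.Ioo_subset_Icc_self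
    have htP : Tendsto (fun x => P y - P x) (𝓝[Set.Ioo a y] a) (𝓝 (P y - P a)) := by
      refine Tendsto.const_sub _ ?_
      exact ((hPcont a (Set.left_mem_Icc.mpr hab.le)).mono hsub').tendsto
    have htU : Tendsto (fun x => |u x| + |u y| + C) (𝓝[Set.Ioo a y] a)
        (𝓝 (|u a| + |u y| + C)) := by
      refine Tendsto.add_const _ (Tendsto.add_const _ ?_)
      exact (continuous_abs.continuousAt.tendsto.comp
        ((hu a (Set.left_mem_Icc.mpr hab.le)).mono hsub').tendsto)
    have hev : ∀ᶠ x in 𝓝[Set.Ioo a y] a, P y - P x ≤ |u x| + |u y| + C := by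
      filter_upwards [self_mem_nhdsWithin] with x hx
      have hx' : x ∈ Set.Ioo a b := hsub hx
      have := h x hx' y hy hx.2.le
      rw [hsplit x (Set.Ioo_subset_Icc_self hx') y (Set.Ioo_subset_Icc_self hy) hx.2.le] at this
      linarith
    have hle := le_of_tendsto_of_tendsto htP htU hev
    have hPa : P a = 0 := by simp [P]
    rw [hPa, hua] at hle
    simpa using hle
  -- Step 2: tend y → b
  have hne' : (𝓝[Set.Ioo a b] b).NeBot := right_nhdsWithin_Ioo_neBot hab
  have htP : Tendsto P (𝓝[Set.Ioo a b] b) (𝓝 (P b)) :=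
    ((hPcont b (Set.right_mem_Icc.mpr hab.le)).mono Set.Ioo_subset_Icc_self).tendsto
  have htU : Tendsto (fun y => |u y| + C) (𝓝[Set.Ioo a b] b) (𝓝 (|u b| + C)) :=
    Tendsto.add_const _ (continuous_abs.continuousAt.tendsto.comp
      ((hu b (Set.right_mem_Icc.mpr hab.le)).mono Set.Ioo_subset_Icc_self).tendsto)
  have hev : ∀ᶠ y in 𝓝[Set.Ioo a b] b, P y ≤ |u y| + C := by
    filter_upwards [self_mem_nhdsWithin] with y hy using step1 y hy
  have hle := le_of_tendsto_of_tendsto htP htU hev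
  rw [hub] at hle
  simpa [P] using hle

theorem lagrange_multiplier_bounds
    (κ V a b lam : ℝ) (hκ : 0 < κ) (hV : 0 < V) (hab : a < b)
    (u : ℝ → ℝ) (hu : ContDiffOn ℝ 2 u (Set.Icc a b))
    (hua : u a = 0) (hub : u b = 0)
    (hvol : (∫ x in a..b, u x) = V)
    -- (d/dx)(u'/√(1+(u')²)) − κu + λ = 0 on (a,b), i.e. the flux
    -- u'/√(1+(u')²) has derivative κu − λ there
    (hODE : ∀ x ∈ Set.Ioo a b,
      HasDerivAt (fun y => deriv u y / Real.sqrt (1 + (deriv u y) ^ 2))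
        (κ * u x - lam) x) :
    0 < lam ∧ lam ≤ (κ * V + 2) / (b - a) := by
  set F : ℝ → ℝ := fun y => deriv u y / Real.sqrt (1 + (deriv u y) ^ 2) with hFdef
  have hu_cont : ContinuousOn u (Set.Icc a b) := hu.continuousOn
  have hd_cont : ContinuousOn (deriv u) (Set.Ioo a b) :=
    (hu.mono Set.Ioo_subset_Icc_self).continuousOn_deriv_of_isOpen isOpen_Ioo (by norm_num)
  have hsqrt_pos : ∀ d : ℝ, 0 < Real.sqrt (1 + d ^ 2) := fun d =>
    Real.sqrt_pos.mpr (by positivity)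
  have hFabs : ∀ t, |F t| ≤ 1 := by
    intro t
    have h1 : |deriv u t| < Real.sqrt (1 + (deriv u t) ^ 2) := by
      rw [← Real.sqrt_sq_eq_abs]
      exact Real.sqrt_lt_sqrt (sq_nonneg _) (by linarith)
    have h2 := hsqrt_pos (deriv u t)
    rw [hFdef]
    simp only []
    rw [abs_div, abs_of_pos h2]
    exact le_of_lt ((div_lt_one h2).mpr h1)
  have hF_cont : ContinuousOn F (Set.Ioo a b) := by
    refine hd_cont.div (Real.continuous_sqrt.comp_continuousOn
      (continuousOn_const.add (hd_cont.pow 2))) fun t _ => (hsqrt_pos _).ne'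
  have hu_deriv : ∀ t ∈ Set.Ioo a b, HasDerivAt u (deriv u t) t := fun t ht =>
    ((hu.contDiffAt (Icc_mem_nhds ht.1 ht.2)).differentiableAt (by norm_num)).hasDerivAt
  -- Upper bound
  have hupper : lam * (b - a) - κ * V ≤ 2 := by
    have haux := aux_limit a b hab u (fun t => lam - κ * u t) hu_cont hua hub
      (continuousOn_const.sub (continuousOn_const.mul hu_cont)) 2 ?_
    · have hInt1 : IntervalIntegrable (fun t => κ * u t) volume a b :=
        (continuousOn_const.mul hu_cont).intervalIntegrable_of_Icc hab.le
      have : (∫ t in a..b, (lam - κ * u t)) = lam * (b - a) - κ * V := by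
        rw [intervalIntegral.integral_sub (intervalIntegrable_const) hInt1,
          intervalIntegral.integral_const_mul, hvol, intervalIntegral.integral_const]
        simp [smul_eq_mul]; ring
      linarith [this ▸ haux]
    · intro x hx y hy hxy
      have hsub : Set.uIcc x y ⊆ Set.Ioo a b := by
        rw [Set.uIcc_of_le hxy]
        exact fun t ht => ⟨lt_of_lt_of_le hx.1 ht.1, lt_of_le_of_lt ht.2 hy.2⟩
      have hsub' : Set.Icc x y ⊆ Set.Icc a b :=
        Set.Icc_subset_Icc hx.1.le hy.2.le
      have hInt : IntervalIntegrable (fun t => κ * u t - lam) volume x y :=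
        (((continuousOn_const.mul hu_cont).sub continuousOn_const).mono hsub').intervalIntegrable_of_Icc hxy
      have hftc : (∫ t in x..y, (κ * u t - lam)) = F y - F x :=
        intervalIntegral.integral_eq_sub_of_hasDerivAt (fun t ht => hODE t (hsub ht)) hInt
      have hneg : (∫ t in x..y, (lam - κ * u t)) = -(F y - F x) := by
        have : (∫ t in x..y, (lam - κ * u t)) = ∫ t in x..y, -((κ * u t) - lam) := by
          congr 1; funext t; ring
        rw [this, intervalIntegral.integral_neg, hftc]
      have h1 := hFabs x
      have h2 := hFabs y
      rw [hneg]
      have := abs_le.mp h1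
      have := abs_le.mp h2
      have hux := abs_nonneg (u x)
      have huy := abs_nonneg (u y)
      linarith [abs_le.mp h1, abs_le.mp h2]
  -- Integral inequality for positivity
  have hlow : (∫ t in a..b, (κ * u t - lam) * u t) ≤ 0 := by
    have haux := aux_limit a b hab u (fun t => (κ * u t - lam) * u t) hu_cont hua hub
      (((continuousOn_const.mul hu_cont).sub continuousOn_const).mul hu_cont) 0 ?_
    · linarith
    · intro x hx y hy hxy
      have hsub : Set.Icc x y ⊆ Set.Ioo a b :=
        fun t ht => ⟨lt_of_lt_of_le hx.1 ht.1, lt_of_le_of_lt ht.2 hy.2⟩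
      have hsub2 : Set.Icc x y ⊆ Set.Icc a b := hsub.trans Set.Ioo_subset_Icc_self
      set H : ℝ → ℝ := fun t => F t * u t with hHdef
      set h' : ℝ → ℝ := fun t => (κ * u t - lam) * u t + F t * deriv u t with hh'def
      have hH : ∀ t ∈ Set.uIcc x y, HasDerivAt H (h' t) t := by
        intro t ht
        rw [Set.uIcc_of_le hxy] at ht
        exact (hODE t (hsub ht)).mul (hu_deriv t (hsub ht))
      have hh'cont : ContinuousOn h' (Set.Icc x y) := by
        refine ContinuousOn.add ?_ ?_
        · exact (((continuousOn_const.mul (hu_cont.mono hsub2)).sub continuousOn_const).mul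
            (hu_cont.mono hsub2))
        · exact (hF_cont.mono hsub).mul (hd_cont.mono hsub)
      have hh'Int : IntervalIntegrable h' volume x y := hh'cont.intervalIntegrable_of_Icc hxy
      have hgInt : IntervalIntegrable (fun t => (κ * u t - lam) * u t) volume x y :=
        ((((continuousOn_const.mul hu_cont).sub continuousOn_const).mul hu_cont).mono
          hsub2).intervalIntegrable_of_Icc hxy
      have hftc : (∫ t in x..y, h' t) = H y - H x :=
        intervalIntegral.integral_eq_sub_of_hasDerivAt hH hh'Int
      have hmono : (∫ t in x..y, (κ * u t - lam) * u t) ≤ ∫ t in x..y, h' t := by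
        refine intervalIntegral.integral_mono_on hxy hgInt hh'Int fun t _ => ?_
        have hnn : 0 ≤ F t * deriv u t := by
          have : F t * deriv u t = (deriv u t) ^ 2 / Real.sqrt (1 + (deriv u t) ^ 2) := by
            rw [hFdef]; ring
          rw [this]
          exact div_nonneg (sq_nonneg _) (Real.sqrt_nonneg _)
        simp only [hh'def]
        linarith
      have hHbd : ∀ t, |H t| ≤ |u t| := by
        intro t
        rw [hHdef]
        simp only []
        rw [abs_mul]
        calc |F t| * |u t| ≤ 1 * |u t| := by
              exact mul_le_mul_of_nonneg_right (hFabs t) (abs_nonneg _)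
          _ = |u t| := one_mul _
      have h1 := abs_le.mp (hHbd x)
      have h2 := abs_le.mp (hHbd y)
      have h3 := le_abs_self (u x)
      have h4 := neg_abs_le (u x)
      calc (∫ t in x..y, (κ * u t - lam) * u t) ≤ H y - H x := hftc ▸ hmono
        _ ≤ |u x| + |u y| + 0 := by
            have := abs_le.mp (hHbd x); have := abs_le.mp (hHbd y); linarith
  -- expand the integral
  have hI_int : IntervalIntegrable (fun t => u t ^ 2) volume a b :=
    (hu_cont.pow 2).intervalIntegrable_of_Icc hab.le
  set I : ℝ := ∫ t in a..b, u t ^ 2 with hIdef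
  have hexp : (∫ t in a..b, (κ * u t - lam) * u t) = κ * I - lam * V := by
    have h1 : ∀ t, (κ * u t - lam) * u t = κ * u t ^ 2 - lam * u t := fun t => by ring
    simp_rw [h1]
    rw [intervalIntegral.integral_sub (f := fun t => κ * u t ^ 2) (g := fun t => lam * u t)
      ((continuousOn_const.mul (hu_cont.pow 2)).intervalIntegrable_of_Icc hab.le)
      ((continuousOn_const.mul hu_cont).intervalIntegrable_of_Icc hab.le),
      intervalIntegral.integral_const_mul, intervalIntegral.integral_const_mul, hvol]
  -- I > 0
  have hIpos : 0 < I := by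
    -- find a point where u is positive
    have hex : ∃ x₀ ∈ Set.Icc a b, 0 < u x₀ := by
      by_contra hcon
      push_neg at hcon
      have : (∫ t in a..b, u t) ≤ 0 := by
        have := intervalIntegral.integral_nonneg (μ := MeasureTheory.volume)
          (f := fun t => -u t) hab.le (fun t ht => neg_nonneg.mpr (hcon t ht))
        rw [intervalIntegral.integral_neg] at this
        linarith
      linarith [hvol ▸ this]
    obtain ⟨x₀, hx₀m, hx₀⟩ := hex
    have hx₀o : x₀ ∈ Set.Ioo a b := by
      rcases eq_or_lt_of_le hx₀m.1 with h | h
      · exact absurd (h ▸ hua) (by rw [← h] at hx₀; linarith)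
      rcases eq_or_lt_of_le hx₀m.2 with h' | h'
      · rw [h', hub] at hx₀; linarith
      exact ⟨h, h'⟩
    have hc : ContinuousAt u x₀ := hu_cont.continuousAt (Icc_mem_nhds hx₀o.1 hx₀o.2)
    have hev : ∀ᶠ x in 𝓝 x₀, u x₀ / 2 < u x :=
      hc.eventually_const_lt (by linarith)
    have hmem : {x | u x₀ / 2 < u x} ∩ Set.Ioo a b ∈ 𝓝 x₀ :=
      Filter.inter_mem hev (isOpen_Ioo.mem_nhds hx₀o)
    obtain ⟨ε, hε, hball⟩ := Metric.mem_nhds_iff.mp hmem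
    set c := x₀ - ε / 2 with hc'
    set d := x₀ + ε / 2 with hd'
    have hcd : c < d := by simp [hc', hd']; linarith
    have hIcc : Set.Icc c d ⊆ {x | u x₀ / 2 < u x} ∩ Set.Ioo a b := by
      refine fun t ht => hball ?_
      rw [Metric.mem_ball, Real.dist_eq, abs_lt]
      constructor <;> [skip; skip] <;>
        · simp only [hc', hd'] at ht
          rcases ht with ⟨h1, h2⟩
          linarith
    have hsubIoo : Set.Icc c d ⊆ Set.Ioo a b := fun t ht => (hIcc ht).2
    have hsubIcc : Set.Icc c d ⊆ Set.Icc a b := hsubIoo.trans Set.Ioo_subset_Icc_self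
    have hac : a ≤ c := (hsubIoo (Set.left_mem_Icc.mpr hcd.le)).1.le
    have hdb : d ≤ b := (hsubIoo (Set.right_mem_Icc.mpr hcd.le)).2.le
    have hi1 : IntervalIntegrable (fun t => u t ^ 2) volume a c :=
      ((hu_cont.pow 2).mono (Set.Icc_subset_Icc le_rfl (hcd.le.trans hdb))).intervalIntegrable_of_Icc hac
    have hi2 : IntervalIntegrable (fun t => u t ^ 2) volume c d :=
      ((hu_cont.pow 2).mono hsubIcc).intervalIntegrable_of_Icc hcd.le
    have hi3 : IntervalIntegrable (fun t => u t ^ 2) volume d b :=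
      ((hu_cont.pow 2).mono (Set.Icc_subset_Icc (hac.trans hcd.le) le_rfl)).intervalIntegrable_of_Icc hdb
    have hmid : 0 < ∫ t in c..d, u t ^ 2 := by
      refine intervalIntegral.intervalIntegral_pos_of_pos_on hi2 ?_ hcd
      intro t ht
      have := (hIcc (Set.Ioo_subset_Icc_self ht)).1
      have : 0 < u t := lt_trans (by linarith) this
      positivity
    have h1 : (0:ℝ) ≤ ∫ t in a..c, u t ^ 2 :=
      intervalIntegral.integral_nonneg hac fun t _ => sq_nonneg _
    have h3 : (0:ℝ) ≤ ∫ t in d..b, u t ^ 2 :=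
      intervalIntegral.integral_nonneg hdb fun t _ => sq_nonneg _
    have hsplit1 := intervalIntegral.integral_add_adjacent_intervals hi1 hi2
    have hsplit2 := intervalIntegral.integral_add_adjacent_intervals
      (hi1.trans hi2) hi3
    rw [hIdef, ← hsplit2, ← hsplit1]
    linarith
  -- conclude
  have hlamV : κ * I ≤ lam * V := by linarith [hexp ▸ hlow]
  have hlam_pos : 0 < lam := by
    by_contra hcon
    push_neg at hcon
    nlinarith
  refine ⟨hlam_pos, ?_⟩
  rw [le_div_iff₀ (by linarith : (0:ℝ) < b - a)]
  linarith
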